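/- Let p > 0, q = ν - p, h(x) = x^{2p} (log x)^ν, f(x) = x^p (log x)^q, and g(x) = x^{2p-2} (log x)^{ν-1}. Then liminf_{x→∞} g(x) / f'(f⁻¹(h(x))) > 0. -/

import Mathlib

set_option maxHeartbeats 1000000
open Real Filter Asymptotics

lemma loglog_le (a b : ℝ) (hb : 0 < b) :
    ∀ᶠ y in atTop, |a| * Real.log (Real.log y) ≤ b * Real.log y := by
  have h : (fun y => Real.log (Real.log y)) =o[atTop] fun y => Real.log y :=
    Real.isLittleO_log_id_atTop.comp_tendsto Real.tendsto_log_atTop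
  have hc : 0 < b / (|a| + 1) := by positivity
  filter_upwards [h.def hc, Real.tendsto_log_atTop.eventually_ge_atTop 0] with y h1 h2
  simp only [Real.norm_eq_abs, abs_of_nonneg h2] at h1
  have key : |a| * (b/(|a|+1)) ≤ b := by
    rw [mul_div_assoc', div_le_iff₀ (by positivity)]
    nlinarith [abs_nonneg a]
  calc |a| * Real.log (Real.log y)
      ≤ |a| * (b/(|a|+1) * Real.log y) :=
        mul_le_mul_of_nonneg_left ((le_abs_self _).trans h1) (abs_nonneg a)
    _ = |a| * (b/(|a|+1)) * Real.log y := by ring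
    _ ≤ b * Real.log y := mul_le_mul_of_nonneg_right key h2

lemma h_tend (p ν : ℝ) (hp : 0 < p) :
    Tendsto (fun x : ℝ => x ^ (2*p) * Real.log x ^ ν) atTop atTop := by
  have hε : 0 < p / (|ν| + 1) := by positivity
  have hlog : Real.log =o[atTop] fun x : ℝ => x ^ (p/(|ν|+1)) :=
    isLittleO_log_rpow_atTop hε
  refine tendsto_atTop_mono' atTop ?_ (tendsto_rpow_atTop hp)
  filter_upwards [hlog.def one_pos, eventually_ge_atTop (Real.exp 1)] with x h1 h2
  have hx1 : (1:ℝ) ≤ x := le_trans (by nlinarith [Real.add_one_le_exp 1]) h2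
  have hx0 : (0:ℝ) < x := by linarith
  have hX1 : (1:ℝ) ≤ Real.log x := by
    rw [Real.le_log_iff_exp_le hx0]; simpa using h2
  have hX0 : (0:ℝ) ≤ Real.log x := by linarith
  simp only [Real.norm_eq_abs, abs_of_nonneg hX0, abs_of_nonneg (Real.rpow_nonneg hx0.le _),
    one_mul] at h1
  have h5 : Real.log x ^ |ν| ≤ x ^ p := by
    calc Real.log x ^ |ν| ≤ (x ^ (p/(|ν|+1))) ^ |ν| :=
          Real.rpow_le_rpow hX0 h1 (abs_nonneg ν)
    _ = x ^ (p/(|ν|+1) * |ν|) := (Real.rpow_mul hx0.le _ _).symm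
    _ ≤ x ^ p := by
        apply Real.rpow_le_rpow_of_exponent_le hx1
        rw [div_mul_eq_mul_div, div_le_iff₀ (by positivity)]
        nlinarith [abs_nonneg ν]
  have h6 : x ^ (-p) ≤ Real.log x ^ ν := by
    calc x ^ (-p) = (x ^ p)⁻¹ := Real.rpow_neg hx0.le p
    _ ≤ (Real.log x ^ |ν|)⁻¹ := inv_anti₀ (by positivity) h5
    _ = Real.log x ^ (-|ν|) := (Real.rpow_neg hX0 _).symm
    _ ≤ Real.log x ^ ν := Real.rpow_le_rpow_of_exponent_le hX1 (neg_abs_le ν)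
  calc x ^ p = x ^ (2*p) * x ^ (-p) := by
        rw [← Real.rpow_add hx0]; ring_nf
  _ ≤ x ^ (2*p) * Real.log x ^ ν :=
        mul_le_mul_of_nonneg_left h6 (Real.rpow_nonneg hx0.le _)

lemma rpow_le_sum (a b t s : ℝ) (ha : 0 < a) (h1 : a ≤ t) (h2 : t ≤ b) :
    t ^ s ≤ a ^ s + b ^ s := by
  rcases le_or_gt 0 s with hs | hs
  · calc t^s ≤ b^s := Real.rpow_le_rpow (le_trans ha.le h1) h2 hs
    _ ≤ a^s + b^s := le_add_of_nonneg_left (Real.rpow_nonneg ha.le s)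
  · calc t^s ≤ a^s := Real.rpow_le_rpow_of_nonpos ha h1 hs.le
    _ ≤ a^s + b^s := le_add_of_nonneg_right (Real.rpow_nonneg (by linarith) s)

-- main computational core, as a standalone lemma about a single point
lemma core (p ν q x u : ℝ) (hp : 0 < p) (hq : q = ν - p)
    (hx : Real.exp (Real.exp 1) ≤ x)
    (hu : Real.exp (Real.exp 1) ≤ u)
    (h2 : |ν| * Real.log (Real.log x) ≤ p * Real.log x)
    (h3 : |q| ≤ (p/3) * Real.log x)
    (h6 : |q| * Real.log (Real.log u) ≤ (p/2) * Real.log u)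
    (hfu : u ^ p * Real.log u ^ q = x ^ (2*p) * Real.log x ^ ν) :
    ((2 * (((2/3:ℝ)^q + (6:ℝ)^q) ^ (-(1/p)))) / (21*p)) ≤
        (x ^ (2*p-2) * Real.log x ^ (ν-1)) /
          (u ^ (p-1) * Real.log u ^ (q-1) * (p * Real.log u + q)) ∧
      (x ^ (2*p-2) * Real.log x ^ (ν-1)) /
          (u ^ (p-1) * Real.log u ^ (q-1) * (p * Real.log u + q)) ≤
        18 * (((1/6:ℝ)^q + (3/2:ℝ)^q) ^ (1/p)) / p := by
  have he1 : (1:ℝ) < Real.exp 1 := by nlinarith [Real.add_one_le_exp 1]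
  have hee : (1:ℝ) < Real.exp (Real.exp 1) := by
    nlinarith [Real.add_one_le_exp (Real.exp 1)]
  have hx0 : (0:ℝ) < x := by linarith
  have hu0 : (0:ℝ) < u := by linarith
  set X := Real.log x with hXdef
  set L := Real.log u with hLdef
  have hX : Real.exp 1 ≤ X := by rw [hXdef, Real.le_log_iff_exp_le hx0]; exact hx
  have hL : Real.exp 1 ≤ L := by rw [hLdef, Real.le_log_iff_exp_le hu0]; exact hu
  have hX1 : (1:ℝ) < X := lt_of_lt_of_le he1 hX
  have hL1 : (1:ℝ) < L := lt_of_lt_of_le he1 hL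
  have hX0 : (0:ℝ) < X := by linarith
  have hL0 : (0:ℝ) < L := by linarith
  have hlX : (1:ℝ) ≤ Real.log X := by rw [Real.le_log_iff_exp_le hX0]; exact hX
  have hlL : (1:ℝ) ≤ Real.log L := by rw [Real.le_log_iff_exp_le hL0]; exact hL
  -- take logs of hfu
  have hlog : p * L + q * Real.log L = 2*p*X + ν * Real.log X := by
    have := congrArg Real.log hfu
    rwa [Real.log_mul (by positivity) (by positivity),
      Real.log_mul (by positivity) (by positivity),
      Real.log_rpow hu0, Real.log_rpow hx0, Real.log_rpow hX0, Real.log_rpow hL0] at this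
  -- bounds on L
  have hb1 : q * Real.log L ≤ (p/2) * L := by
    calc q * Real.log L ≤ |q| * Real.log L :=
          mul_le_mul_of_nonneg_right (le_abs_self q) (by linarith)
    _ ≤ (p/2) * L := h6
  have hb2 : -((p/2) * L) ≤ q * Real.log L := by
    have : -q * Real.log L ≤ |q| * Real.log L :=
      mul_le_mul_of_nonneg_right (neg_le_abs q) (by linarith)
    linarith
  have hb3 : ν * Real.log X ≤ p * X := by
    calc ν * Real.log X ≤ |ν| * Real.log X :=
          mul_le_mul_of_nonneg_right (le_abs_self ν) (by linarith)
    _ ≤ p * X := h2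
  have hb4 : -(p * X) ≤ ν * Real.log X := by
    have : -ν * Real.log X ≤ |ν| * Real.log X :=
      mul_le_mul_of_nonneg_right (neg_le_abs ν) (by linarith)
    linarith
  have hL6 : L ≤ 6 * X := by
    have h : p * L ≤ p * (6 * X) := by nlinarith
    exact (mul_le_mul_iff_right₀ hp).mp h
  have hL23 : (2/3) * X ≤ L := by
    have h : p * ((2/3) * X) ≤ p * L := by nlinarith
    exact (mul_le_mul_iff_right₀ hp).mp h
  -- rpow bounds
  set Kq : ℝ := (2/3:ℝ)^q + (6:ℝ)^q with hKqdef
  set kq : ℝ := (1/6:ℝ)^q + (3/2:ℝ)^q with hkqdef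
  have hKq0 : 0 < Kq := by positivity
  have hkq0 : 0 < kq := by positivity
  have hLq_up : L ^ q ≤ Kq * X ^ q := by
    calc L ^ q ≤ ((2/3)*X) ^ q + (6*X) ^ q :=
        rpow_le_sum _ _ _ _ (by linarith) hL23 hL6
    _ = Kq * X ^ q := by
        rw [Real.mul_rpow (by norm_num) hX0.le, Real.mul_rpow (by norm_num) hX0.le, hKqdef]
        ring
  have hXq_up : X ^ q ≤ kq * L ^ q := by
    calc X ^ q ≤ ((1/6)*L) ^ q + ((3/2)*L) ^ q :=
        rpow_le_sum _ _ _ _ (by linarith) (by linarith) (by linarith)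
    _ = kq * L ^ q := by
        rw [Real.mul_rpow (by norm_num) hL0.le, Real.mul_rpow (by norm_num) hL0.le, hkqdef]
        ring
  have hLq0 : 0 < L ^ q := Real.rpow_pos_of_pos hL0 q
  have hXq0 : 0 < X ^ q := Real.rpow_pos_of_pos hX0 q
  -- u bounds
  have hXsplit : X ^ ν = X ^ p * X ^ q := by
    rw [← Real.rpow_add hX0]; congr 1; rw [hq]; ring
  have hup_eq : u ^ p = x ^ (2*p) * X ^ ν / L ^ q := by
    field_simp [hLq0.ne'] at hfu ⊢
    linarith [hfu]
  set cl : ℝ := Kq ^ (-(1/p)) with hcldef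
  set cu : ℝ := kq ^ (1/p) with hcudef
  have hcl0 : 0 < cl := Real.rpow_pos_of_pos hKq0 _
  have hcu0 : 0 < cu := Real.rpow_pos_of_pos hkq0 _
  have hexp : -(1/p) * p = -1 := by field_simp
  have hclp : cl ^ p = Kq⁻¹ := by
    rw [hcldef, ← Real.rpow_mul hKq0.le, hexp, Real.rpow_neg_one]
  have hcup : cu ^ p = kq := by
    rw [hcudef, ← Real.rpow_mul hkq0.le, one_div, inv_mul_cancel₀ hp.ne', Real.rpow_one]
  have hx2p : x ^ (2*p) = (x ^ (2:ℝ)) ^ p := by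
    rw [← Real.rpow_mul hx0.le]
  have hu_lo : cl * x ^ (2:ℝ) * X ≤ u := by
    rw [← Real.rpow_le_rpow_iff (by positivity) hu0.le hp]
    rw [Real.mul_rpow (by positivity) hX0.le, Real.mul_rpow hcl0.le (by positivity),
      hclp, ← hx2p, hup_eq]
    rw [hXsplit, le_div_iff₀ hLq0]
    calc Kq⁻¹ * x^(2*p) * X^p * L^q
        ≤ Kq⁻¹ * x^(2*p) * X^p * (Kq * X^q) :=
          mul_le_mul_of_nonneg_left hLq_up (by positivity)
    _ = x^(2*p) * (X^p * X^q) := by field_simp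
  have hu_hi : u ≤ cu * x ^ (2:ℝ) * X := by
    rw [← Real.rpow_le_rpow_iff hu0.le (by positivity) hp]
    rw [Real.mul_rpow (by positivity) hX0.le, Real.mul_rpow hcu0.le (by positivity),
      hcup, ← hx2p, hup_eq, hXsplit, div_le_iff₀ hLq0]
    calc x^(2*p) * (X^p * X^q)
        ≤ x^(2*p) * (X^p * (kq * L^q)) :=
          mul_le_mul_of_nonneg_left (mul_le_mul_of_nonneg_left hXq_up (by positivity))
            (by positivity)
    _ = kq * x^(2*p) * X^p * L^q := by ring
  -- bounds on p*L+q
  have hPL_lo : (p/3)*X ≤ p*L + q := by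
    have h7 : p*((2/3)*X) ≤ p*L := mul_le_mul_of_nonneg_left hL23 hp.le
    have h8 : -|q| ≤ q := neg_abs_le q
    linarith
  have hPL_hi : p*L + q ≤ 7*p*X := by
    have h7 : p*L ≤ p*(6*X) := mul_le_mul_of_nonneg_left hL6 hp.le
    have h8 : q ≤ |q| := le_abs_self q
    have h9 : 0 ≤ p*X := by positivity
    linarith
  have hPL0 : 0 < p*L+q := lt_of_lt_of_le (by positivity) hPL_lo
  -- ratio identity
  have hA0 : 0 < x ^ (2:ℝ) * X * (p*L+q) := by positivity
  have hratio : x^(2*p-2) * X^(ν-1) / (u^(p-1) * L^(q-1) * (p*L+q))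
      = u * L / (x^(2:ℝ) * X * (p*L+q)) := by
    rw [Real.rpow_sub hx0 (2*p) 2, Real.rpow_sub hX0 ν 1, Real.rpow_sub hu0 p 1,
      Real.rpow_sub hL0 q 1, Real.rpow_one, Real.rpow_one, Real.rpow_one, hup_eq]
    field_simp
  constructor
  · rw [hratio, div_le_div_iff₀ (by positivity) hA0]
    have k1 : (cl*x^(2:ℝ)*X) * ((2/3)*X) ≤ u*L :=
      mul_le_mul hu_lo hL23 (by positivity) hu0.le
    have k2 : x^(2:ℝ)*X*(p*L+q) ≤ x^(2:ℝ)*X*(7*p*X) :=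
      mul_le_mul_of_nonneg_left hPL_hi (by positivity)
    calc 2*cl*(x^(2:ℝ)*X*(p*L+q)) ≤ 2*cl*(x^(2:ℝ)*X*(7*p*X)) := by
          apply mul_le_mul_of_nonneg_left k2; linarith
    _ = 21*p*((cl*x^(2:ℝ)*X)*((2/3)*X)) := by ring
    _ ≤ 21*p*(u*L) := by apply mul_le_mul_of_nonneg_left k1; linarith
    _ = u*L*(21*p) := by ring
  · rw [hratio, div_le_div_iff₀ hA0 hp]
    have k3 : u*L ≤ (cu*x^(2:ℝ)*X)*(6*X) :=
      mul_le_mul hu_hi hL6 hL0.le (by positivity)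
    have k4 : x^(2:ℝ)*X*((p/3)*X) ≤ x^(2:ℝ)*X*(p*L+q) :=
      mul_le_mul_of_nonneg_left hPL_lo (by positivity)
    calc u*L*p = p*(u*L) := by ring
    _ ≤ p*((cu*x^(2:ℝ)*X)*(6*X)) := by apply mul_le_mul_of_nonneg_left k3; linarith
    _ = 18*cu*(x^(2:ℝ)*X*((p/3)*X)) := by ring
    _ ≤ 18*cu*(x^(2:ℝ)*X*(p*L+q)) := by apply mul_le_mul_of_nonneg_left k4; linarith

/-- Let `p > 0`, `q = ν - p`, `h(x) = x^{2p} (log x)^ν`, `f(x) = x^p (log x)^q`,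
`g(x) = x^{2p-2} (log x)^{ν-1}`.  For any branch `finv` of the inverse of `f` near
infinity (i.e. `f (finv x) = x` eventually and `finv → ∞`),
`liminf_{x→∞} g(x) / f'(finv(h(x))) > 0`. -/
theorem liminf_g_div_fprime_pos (p ν : ℝ) (hp : 0 < p) (finv : ℝ → ℝ)
    (hfinv_inv : ∀ᶠ x in atTop, (finv x) ^ p * Real.log (finv x) ^ (ν - p) = x)
    (hfinv_top : Tendsto finv atTop atTop) :
    0 < Filter.liminf
      (fun x : ℝ =>
        (x ^ (2 * p - 2) * Real.log x ^ (ν - 1)) /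
          deriv (fun y => y ^ p * Real.log y ^ (ν - p))
            (finv (x ^ (2 * p) * Real.log x ^ ν)))
      atTop := by
  have hH : Tendsto (fun x : ℝ => x ^ (2*p) * Real.log x ^ ν) atTop atTop := h_tend p ν hp
  have hU : Tendsto (fun x : ℝ => finv (x ^ (2*p) * Real.log x ^ ν)) atTop atTop :=
    hfinv_top.comp hH
  set ε : ℝ := (2 * (((2/3:ℝ)^(ν-p) + (6:ℝ)^(ν-p)) ^ (-(1/p)))) / (21*p) with hεdef
  set B : ℝ := 18 * (((1/6:ℝ)^(ν-p) + (3/2:ℝ)^(ν-p)) ^ (1/p)) / p with hBdef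
  have key : ∀ᶠ x in atTop,
      ε ≤ (x ^ (2 * p - 2) * Real.log x ^ (ν - 1)) /
          deriv (fun y => y ^ p * Real.log y ^ (ν - p))
            (finv (x ^ (2 * p) * Real.log x ^ ν)) ∧
      (x ^ (2 * p - 2) * Real.log x ^ (ν - 1)) /
          deriv (fun y => y ^ p * Real.log y ^ (ν - p))
            (finv (x ^ (2 * p) * Real.log x ^ ν)) ≤ B := by
    filter_upwards [hH.eventually hfinv_inv,
      eventually_ge_atTop (Real.exp (Real.exp 1)),
      loglog_le ν p hp,
      Real.tendsto_log_atTop.eventually_ge_atTop (3*|ν-p|/p),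
      hU.eventually (eventually_ge_atTop (Real.exp (Real.exp 1))),
      hU.eventually (loglog_le (ν-p) (p/2) (by positivity))] with x hfu hx h2 h3' h5 h6
    set u : ℝ := finv (x ^ (2*p) * Real.log x ^ ν) with hudef
    have h3 : |ν - p| ≤ (p/3) * Real.log x := by
      rw [div_le_iff₀ hp] at h3'
      linarith
    have hu0 : (0:ℝ) < u := lt_of_lt_of_le (Real.exp_pos _) h5
    have hL0 : (0:ℝ) < Real.log u := by
      have : Real.exp 1 ≤ Real.log u := by
        rw [Real.le_log_iff_exp_le hu0]; exact h5
      linarith [Real.exp_pos 1]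
    have hd1 : HasDerivAt (fun y : ℝ => y ^ p) (p * u ^ (p-1)) u :=
      Real.hasDerivAt_rpow_const (Or.inl hu0.ne')
    have hd3 : HasDerivAt (fun y : ℝ => Real.log y ^ (ν-p))
        (u⁻¹ * (ν-p) * Real.log u ^ (ν-p-1)) u :=
      (Real.hasDerivAt_log hu0.ne').rpow_const (Or.inl hL0.ne')
    have hd := (hd1.mul hd3).deriv
    have hDeq : deriv (fun y : ℝ => y ^ p * Real.log y ^ (ν-p)) u
        = u^(p-1) * Real.log u^(ν-p-1) * (p * Real.log u + (ν-p)) := by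
      rw [show (fun y : ℝ => y ^ p * Real.log y ^ (ν-p)) = ((fun y : ℝ => y ^ p) * fun y => Real.log y ^ (ν - p)) from rfl, hd]
      have e1 : u^p = u^(p-1)*u := by
        rw [← Real.rpow_add_one hu0.ne']; congr 1; ring
      have e2 : Real.log u^(ν-p) = Real.log u^(ν-p-1)*Real.log u := by
        rw [← Real.rpow_add_one hL0.ne']; congr 1; ring
      rw [e1, e2]; field_simp
    rw [hDeq]
    exact core p ν (ν-p) x u hp rfl hx h5 h2 h3 h6 hfu
  have hlo : ∀ᶠ x in atTop, ε ≤ (x ^ (2 * p - 2) * Real.log x ^ (ν - 1)) /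
          deriv (fun y => y ^ p * Real.log y ^ (ν - p))
            (finv (x ^ (2 * p) * Real.log x ^ ν)) := key.mono fun x h => h.1
  have hhi := key.mono fun x h => h.2
  have hcb := isCoboundedUnder_ge_of_eventually_le atTop hhi
  refine lt_of_lt_of_le ?_ (le_liminf_of_le hcb hlo)
  rw [hεdef]
  positivity
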